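/- Let Σ ⊆ ℝ² be open, z ∈ Σ, and let α : (−1,1) → Σ be a curve differentiable at 0 with α(0) = z and α′(0) ≠ 0. Let (t_n) be a sequence of nonzero real numbers with t_n → 0, and set x_n = α(t_n); assume x_n ≠ z for all n. Then there exists λ ∈ ℝ, depending only on the sequence (t_n) and on α, such that every map P : Σ → ℝ² that is differentiable at z and satisfies P(z) = z and P(x_n) = x_{n+1} for all n verifies DP(z)(α′(0)) = λ · α′(0). -/

import Mathlib

open Set Filter

/-- **Invariant subspaces for derivatives of holonomy maps, item 2.**
Given a curve `α` through `z` differentiable at `0` with `α′(0) ≠ 0` and a sequence of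
nonzero parameters `t n → 0` with `x n = α (t n) ≠ z`, there is `λ ∈ ℝ`, depending only
on the sequence and the curve, such that every `P` differentiable at `z` with `P z = z`
and `P (x n) = x (n+1)` for all `n` satisfies `DP(z)(α′(0)) = λ • α′(0)`. -/
theorem eigenvalue_from_monotone_sequence
    (S : Set (ℝ × ℝ)) (hS : IsOpen S) (z : ℝ × ℝ) (hz : z ∈ S)
    (α : ℝ → ℝ × ℝ) (v : ℝ × ℝ)
    (hα : HasDerivAt α v 0) (hα0 : α 0 = z) (hv : v ≠ 0)
    (hαS : ∀ s ∈ Set.Ioo (-1 : ℝ) 1, α s ∈ S)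
    (t : ℕ → ℝ) (ht0 : ∀ n, t n ≠ 0) (htI : ∀ n, t n ∈ Set.Ioo (-1 : ℝ) 1)
    (ht : Tendsto t atTop (nhds 0))
    (hne : ∀ n, α (t n) ≠ z) :
    ∃ lam : ℝ, ∀ (P : ℝ × ℝ → ℝ × ℝ) (P' : (ℝ × ℝ) →L[ℝ] ℝ × ℝ),
      HasFDerivAt P P' z → P z = z → (∀ n, P (α (t n)) = α (t (n + 1))) →
      P' v = lam • v := by
  classical
  obtain ⟨g, -, hgv⟩ := exists_dual_vector ℝ v (norm_ne_zero_iff.mpr hv)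
  set f : (ℝ × ℝ) →L[ℝ] ℝ := ‖v‖⁻¹ • g with hf
  have hfv : f v = 1 := by
    simp only [hf, ContinuousLinearMap.smul_apply, hgv, smul_eq_mul]
    exact inv_mul_cancel₀ (norm_ne_zero_iff.mpr hv)
  set r : ℕ → ℝ := fun n => t (n + 1) / t n with hr
  set u : ℕ → ℝ × ℝ := fun n => (t n)⁻¹ • (α (t n) - z) with hu
  have htne : Tendsto t atTop (nhdsWithin 0 {(0:ℝ)}ᶜ) :=
    tendsto_nhdsWithin_of_tendsto_nhds_of_eventually_within _ ht
      (Eventually.of_forall fun n => ht0 n)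
  have huv : Tendsto u atTop (nhds v) := by
    have hslope : Tendsto (slope α 0) (nhdsWithin 0 {(0:ℝ)}ᶜ) (nhds v) :=
      hasDerivAt_iff_tendsto_slope.mp hα
    have := hslope.comp htne
    refine this.congr fun n => ?_
    simp [Function.comp, slope_def_module, hα0, hu]
  have huv1 : Tendsto (fun n => u (n + 1)) atTop (nhds v) :=
    huv.comp (tendsto_add_atTop_nat 1)
  refine ⟨if h : ∃ L, Tendsto r atTop (nhds L) then h.choose else 0, ?_⟩
  intro P P' hP hPz hPx
  -- the key convergence: r n • u (n+1) → P' v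
  have hkey : Tendsto (fun n => r n • u (n + 1)) atTop (nhds (P' v)) := by
    have hPα : HasDerivAt (P ∘ α) (P' v) 0 := by
      refine HasFDerivAt.comp_hasDerivAt 0 ?_ hα
      rw [hα0]; exact hP
    have hslope : Tendsto (slope (P ∘ α) 0) (nhdsWithin 0 {(0:ℝ)}ᶜ) (nhds (P' v)) :=
      hasDerivAt_iff_tendsto_slope.mp hPα
    have := hslope.comp htne
    refine this.congr fun n => ?_
    simp only [Function.comp, slope_def_module, sub_zero, hα0, hPz, hPx n, hu, hr]
    rw [smul_smul]
    congr 1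
    rw [div_mul_eq_mul_div, mul_inv_cancel₀ (ht0 (n+1)), one_div]
  -- apply f to get convergence of the ratios r n
  have hfu : Tendsto (fun n => f (u (n + 1))) atTop (nhds 1) := by
    have := (f.continuous.tendsto v).comp huv1
    rw [hfv] at this; exact this
  have hfru : Tendsto (fun n => r n * f (u (n + 1))) atTop (nhds (f (P' v))) := by
    have := (f.continuous.tendsto (P' v)).comp hkey
    refine this.congr fun n => ?_
    simp [Function.comp]
  have hrt : Tendsto r atTop (nhds (f (P' v))) := by
    have hdiv := hfru.div hfu one_ne_zero
    have : ∀ᶠ n in atTop, r n * f (u (n + 1)) / f (u (n + 1)) = r n := by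
      have : ∀ᶠ n in atTop, f (u (n + 1)) ∈ {x : ℝ | x ≠ 0} :=
        hfu.eventually (isOpen_ne.eventually_mem one_ne_zero)
      filter_upwards [this] with n hn
      field_simp
    simpa [div_one] using hdiv.congr' this
  have hL : ∃ L, Tendsto r atTop (nhds L) := ⟨f (P' v), hrt⟩
  rw [dif_pos hL]
  have hch : hL.choose = f (P' v) := tendsto_nhds_unique hL.choose_spec hrt
  rw [hch]
  -- uniqueness of limits: r n • u (n+1) → both P' v and f (P' v) • v
  have h2 : Tendsto (fun n => r n • u (n + 1)) atTop (nhds (f (P' v) • v)) :=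
    hrt.smul huv1
  exact tendsto_nhds_unique hkey h2
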